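/- Let k be an algebraically closed field of characteristic p > 0 and n, m coprime non-negative integers with n ≠ m and h = n + m ≥ 1. Any two graded 1-truncated Dieudonné modules of type (n,m) over k of dimension h with the same support set {j : Z^j ≠ 0} are isomorphic as graded 1-truncated Dieudonné modules (i.e. by a degree-zero isomorphism commuting with F and V). -/

import Mathlib

open Module

/-- A graded 1-truncated Dieudonné module of type `(n,m)` over a perfect field `k`
of characteristic `p`: a finite-dimensional ℤ-graded `k`-vector space with a
Frobenius-semilinear endomorphism `F` of degree `n` and an inverse-Frobenius-semilinear
endomorphism `Vo` of degree `m` satisfying `Im F = ker Vo` and `Im Vo = ker F`. -/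
structure GradedTDM (k : Type) [Field k] (p : ℕ) [ExpChar k p] [PerfectRing k p]
    (n m : ℕ) where
  Vsp : Type
  [instAdd : AddCommGroup Vsp]
  [instMod : Module k Vsp]
  [instFin : FiniteDimensional k Vsp]
  grading : ℤ → Submodule k Vsp
  internal : DirectSum.IsInternal grading
  F : Vsp → Vsp
  Vo : Vsp → Vsp
  F_add : ∀ x y, F (x + y) = F x + F y
  F_smul : ∀ (a : k) (x), F (a • x) = a ^ p • F x
  Vo_add : ∀ x y, Vo (x + y) = Vo x + Vo y
  Vo_smul : ∀ (a : k) (x), Vo (a • x) = (frobeniusEquiv k p).symm a • Vo x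
  F_deg : ∀ j : ℤ, ∀ x ∈ grading j, F x ∈ grading (j + n)
  Vo_deg : ∀ j : ℤ, ∀ x ∈ grading j, Vo x ∈ grading (j + m)
  range_F : Set.range F = {x | Vo x = 0}
  range_Vo : Set.range Vo = {x | F x = 0}

attribute [instance] GradedTDM.instAdd GradedTDM.instMod GradedTDM.instFin

/-- The canonical step map on the support. -/
def tdmStep (S : Finset ℤ) (n m : ℕ) (j : ℤ) : ℤ :=
  if j + (n : ℤ) ∈ S then j + (n : ℤ) else j - (m : ℤ)

section Ext

/-- Extension of a commutation relation from a basis to the whole space, for additive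
maps that are semilinear with respect to an arbitrary function `σ : k → k`. -/
lemma tdm_ext {k : Type} [Field k] {M₁ M₂ : Type} [AddCommGroup M₁] [Module k M₁]
    [AddCommGroup M₂] [Module k M₂] {ι : Type} [Fintype ι] (b : Basis ι k M₁)
    (φ : M₁ →ₗ[k] M₂) (A₁ : M₁ → M₁) (A₂ : M₂ → M₂) (σ : k → k)
    (h1 : ∀ x y, A₁ (x + y) = A₁ x + A₁ y) (h2 : ∀ x y, A₂ (x + y) = A₂ x + A₂ y)
    (hs1 : ∀ a x, A₁ (a • x) = σ a • A₁ x) (hs2 : ∀ a x, A₂ (a • x) = σ a • A₂ x)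
    (hb : ∀ i, φ (A₁ (b i)) = A₂ (φ (b i))) : ∀ x, φ (A₁ x) = A₂ (φ x) := by
  intro x
  let A₁' : M₁ →+ M₁ := AddMonoidHom.mk' A₁ (fun a b => h1 a b)
  let A₂' : M₂ →+ M₂ := AddMonoidHom.mk' A₂ (fun a b => h2 a b)
  have hA₁ : ∀ y, A₁ y = A₁' y := fun y => rfl
  have hA₂ : ∀ y, A₂ y = A₂' y := fun y => rfl
  conv_lhs => rw [← Basis.sum_repr b x]
  conv_rhs => rw [← Basis.sum_repr b x]
  rw [hA₁, map_sum A₁', map_sum φ]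
  rw [Finset.sum_congr rfl (fun i _ => by rw [← hA₁, hs1])]
  rw [map_sum φ]
  rw [Finset.sum_congr rfl (fun i _ => by rw [map_smul φ, hb i, ← hs2])]
  rw [Finset.sum_congr rfl (fun i _ => hA₂ _), ← map_sum A₂', ← hA₂]
  congr 1
  exact Finset.sum_congr rfl (fun i _ => by rw [map_smul φ])

end Ext
section Comb

/-- One full cycle of a step map has length a multiple structure forcing `h ≤ c`. -/
lemma tdm_period (n m h : ℕ) (hcop : Nat.Coprime n m) (hh : h = n + m) (hh1 : 1 ≤ h)
    (S : Finset ℤ) (τ : ℤ → ℤ) (hτS : ∀ j ∈ S, τ j ∈ S)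
    (hτstep : ∀ j ∈ S, τ j = j + n ∨ τ j = j - m)
    (horb : ∀ j ∈ S, ∀ i : ℕ, τ^[i] j ∈ S)
    (j : ℤ) (hj : j ∈ S) (c : ℕ) (hc : 0 < c) (hcyc : τ^[c] j = j) : h ≤ c := by
  classical
  rcases Nat.lt_or_ge h 2 with h1 | h2
  · omega
  have hn1 : 1 ≤ n := by
    rcases Nat.eq_zero_or_pos n with h0 | h0
    · exfalso; have := hcop; rw [h0] at this
      have : m = 1 := by simpa [Nat.Coprime] using this
      omega
    · exact h0
  have hm1 : 1 ≤ m := by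
    rcases Nat.eq_zero_or_pos m with h0 | h0
    · exfalso; have := hcop; rw [h0] at this
      have : n = 1 := by simpa [Nat.Coprime] using this
      omega
    · exact h0
  set f : ℕ → ℤ := fun i => τ^[i] j with hf
  have hfS : ∀ i, f i ∈ S := fun i => horb j hj i
  have hstep : ∀ i, f (i + 1) = τ (f i) := by
    intro i; simp [hf, Function.iterate_succ_apply']
  set A : Finset ℕ := (Finset.range c).filter (fun i => τ (f i) = f i + n) with hA
  have hd : ∀ i ∈ Finset.range c, f (i + 1) - f i = if i ∈ A then (n : ℤ) else -(m : ℤ) := by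
    intro i hi
    by_cases hiA : i ∈ A
    · simp only [hiA, if_true]
      have : τ (f i) = f i + n := (Finset.mem_filter.mp hiA).2
      rw [hstep, this]; ring
    · simp only [hiA, if_false]
      have : τ (f i) = f i - m := by
        rcases hτstep (f i) (hfS i) with h' | h'
        · exfalso; exact hiA (Finset.mem_filter.mpr ⟨hi, h'⟩)
        · exact h'
      rw [hstep, this]; ring
  have htel : (∑ i ∈ Finset.range c, (f (i + 1) - f i)) = f c - f 0 := Finset.sum_range_sub f c
  have hfc : f c - f 0 = 0 := by simp [hf, hcyc]
  have hsplit : (∑ i ∈ Finset.range c, (f (i + 1) - f i))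
      = (A.card : ℤ) * n - ((c : ℤ) - A.card) * m := by
    rw [Finset.sum_congr rfl hd, Finset.sum_ite]
    simp only [Finset.sum_const, nsmul_eq_mul]
    have h1 : (Finset.range c).filter (fun i => i ∈ A) = A := by
      apply Finset.ext; intro i
      simp only [Finset.mem_filter]
      constructor
      · rintro ⟨_, hi⟩; exact hi
      · intro hi
        refine ⟨?_, hi⟩
        have := hi; rw [hA, Finset.mem_filter] at this
        exact this.1
    have hAc : A.card ≤ c := by
      have := Finset.card_filter_le (Finset.range c) (fun i => τ (f i) = f i + n)
      simpa [hA] using this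
    have h2 : ((Finset.range c).filter (fun i => i ∉ A)).card = c - A.card := by
      have := Finset.card_filter_add_card_filter_not (s := Finset.range c)
        (p := fun i => i ∈ A)
      rw [h1, Finset.card_range] at this
      omega
    rw [h1, h2]
    push_cast [Nat.cast_sub hAc]
    ring
  -- conclude the counting
  set a := A.card with ha
  have hAc : a ≤ c := by
    have := Finset.card_filter_le (Finset.range c) (fun i => τ (f i) = f i + n)
    simpa [hA, ha] using this
  have hcount : (a : ℤ) * n = ((c : ℤ) - a) * m := by
    rw [htel, hfc] at hsplit
    linarith [hsplit]
  set b := c - a with hb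
  have hcb : (c : ℤ) - a = (b : ℤ) := by push_cast [hb, Nat.cast_sub hAc]; ring
  have hnat : a * n = b * m := by
    have : (a : ℤ) * n = (b : ℤ) * m := by rw [← hcb]; exact hcount
    exact_mod_cast this
  have hane : a ≠ 0 := by
    intro h0
    rw [h0] at hnat
    simp at hnat
    rcases hnat with h' | h'
    · omega
    · omega
  have hbne : b ≠ 0 := by
    intro h0
    rw [h0] at hnat
    simp at hnat
    rcases hnat with h' | h'
    · omega
    · omega
  have hma : m ∣ a := by
    have hdvd : m ∣ a * n := ⟨b, by rw [hnat]; ring⟩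
    exact (Nat.Coprime.dvd_of_dvd_mul_right (hcop.symm) hdvd)
  have hnb : n ∣ b := by
    have hdvd : n ∣ b * m := ⟨a, by rw [← hnat]; ring⟩
    exact (Nat.Coprime.dvd_of_dvd_mul_right hcop hdvd)
  have : m ≤ a := Nat.le_of_dvd (Nat.pos_of_ne_zero hane) hma
  have : n ≤ b := Nat.le_of_dvd (Nat.pos_of_ne_zero hbne) hnb
  omega

lemma tdm_distinct (τ : ℤ → ℤ) (j : ℤ) (cm : ℕ) (hcyc : τ^[cm] j = j)
    (hmin : ∀ c', 0 < c' → c' < cm → τ^[c'] j ≠ j) :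
    ∀ i1 i2, i1 < cm → i2 < cm → τ^[i1] j = τ^[i2] j → i1 = i2 := by
  have key : ∀ i1 i2, i1 < cm → i2 < cm → i1 < i2 → τ^[i1] j = τ^[i2] j → False := by
    intro i1 i2 h1 h2 h12 heq
    have e1 : τ^[cm - i2 + i1] j = τ^[cm - i2] (τ^[i1] j) := by
      rw [Function.iterate_add_apply]
    have e2 : τ^[cm - i2] (τ^[i2] j) = τ^[cm] j := by
      rw [← Function.iterate_add_apply]
      congr 1
      omega
    have : τ^[cm - i2 + i1] j = j := by
      rw [e1, heq, e2, hcyc]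
    exact hmin (cm - i2 + i1) (by omega) (by omega) this
  intro i1 i2 h1 h2 heq
  rcases Nat.lt_trichotomy i1 i2 with h | h | h
  · exact absurd heq (fun he => key i1 i2 h1 h2 h he)
  · exact h
  · exact absurd heq.symm (fun he => key i2 i1 h2 h1 h he)

lemma tdm_orbit (n m h : ℕ) (hcop : Nat.Coprime n m) (hh : h = n + m) (hh1 : 1 ≤ h)
    (S : Finset ℤ) (τ : ℤ → ℤ) (hτS : ∀ j ∈ S, τ j ∈ S)
    (hτstep : ∀ j ∈ S, τ j = j + n ∨ τ j = j - m)
    (hcard : S.card ≤ h) (j₀ : ℤ) (hj₀ : j₀ ∈ S) :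
    S.card = h ∧ τ^[h] j₀ = j₀ ∧
    (∀ i1 i2, i1 < h → i2 < h → τ^[i1] j₀ = τ^[i2] j₀ → i1 = i2) ∧
    (∀ s ∈ S, ∃ i, i < h ∧ τ^[i] j₀ = s) ∧
    (∀ s ∈ S, ∀ s' ∈ S, (h:ℤ) ∣ s - s' → s = s') := by
  classical
  have horb : ∀ j ∈ S, ∀ i : ℕ, τ^[i] j ∈ S := by
    intro j hj i
    induction i with
    | zero => simpa using hj
    | succ i ih => rw [Function.iterate_succ_apply']; exact hτS _ ih
  -- pigeonhole: find a periodic point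
  have hpig : ∃ i1 ∈ Finset.range (h + 1), ∃ i2 ∈ Finset.range (h + 1),
      i1 ≠ i2 ∧ τ^[i1] j₀ = τ^[i2] j₀ := by
    apply Finset.exists_ne_map_eq_of_card_lt_of_maps_to (t := S)
    · rw [Finset.card_range]; omega
    · intro i _; exact horb j₀ hj₀ i
  obtain ⟨i1, -, i2, -, hne, heq⟩ := hpig
  -- wlog i1 < i2
  have hper : ∃ jp ∈ S, ∃ c : ℕ, 0 < c ∧ τ^[c] jp = jp := by
    rcases Nat.lt_or_ge i1 i2 with hlt | hge
    · refine ⟨τ^[i1] j₀, horb j₀ hj₀ i1, i2 - i1, by omega, ?_⟩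
      rw [← Function.iterate_add_apply]
      rw [show i2 - i1 + i1 = i2 by omega]
      exact heq.symm
    · have hlt : i2 < i1 := by omega
      refine ⟨τ^[i2] j₀, horb j₀ hj₀ i2, i1 - i2, by omega, ?_⟩
      rw [← Function.iterate_add_apply]
      rw [show i1 - i2 + i2 = i1 by omega]
      exact heq
  obtain ⟨jp, hjp, hperex⟩ := hper
  have hfind : ∃ c : ℕ, 0 < c ∧ τ^[c] jp = jp := hperex
  set cmin := Nat.find hfind with hcmin
  obtain ⟨hcmin0, hcmincyc⟩ := Nat.find_spec hfind
  have hminimal : ∀ c', 0 < c' → c' < cmin → τ^[c'] jp ≠ jp := by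
    intro c' hc'0 hc'lt hcontra
    exact Nat.find_min hfind hc'lt ⟨hc'0, hcontra⟩
  have hhc : h ≤ cmin := tdm_period n m h hcop hh hh1 S τ hτS hτstep horb jp hjp cmin hcmin0 hcmincyc
  have hdist := tdm_distinct τ jp cmin hcmincyc hminimal
  -- image of the orbit
  have himcard : ((Finset.range cmin).image (fun i => τ^[i] jp)).card = cmin := by
    rw [Finset.card_image_of_injOn, Finset.card_range]
    intro a ha b hb hab
    exact hdist a b (Finset.mem_range.mp ha) (Finset.mem_range.mp hb) hab
  have himsub : (Finset.range cmin).image (fun i => τ^[i] jp) ⊆ S := by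
    intro s hs
    obtain ⟨i, -, rfl⟩ := Finset.mem_image.mp hs
    exact horb jp hjp i
  have hcge : cmin ≤ S.card := by
    rw [← himcard]; exact Finset.card_le_card himsub
  have hcmeq : cmin = h := by omega
  have hScard : S.card = h := by omega
  have himeq : (Finset.range cmin).image (fun i => τ^[i] jp) = S :=
    Finset.eq_of_subset_of_card_le himsub (by rw [himcard]; omega)
  -- j₀ is on the cycle
  obtain ⟨ip, hip, hipeq⟩ : ∃ i, i ∈ Finset.range cmin ∧ τ^[i] jp = j₀ := by
    have := himeq ▸ hj₀
    obtain ⟨i, hi, hieq⟩ := Finset.mem_image.mp this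
    exact ⟨i, hi, hieq⟩
  have hcyc0 : τ^[h] j₀ = j₀ := by
    have hcmc : τ^[h] jp = jp := by rw [← hcmeq]; exact hcmincyc
    rw [← hipeq, ← Function.iterate_add_apply, Nat.add_comm, Function.iterate_add_apply, hcmc]
  have hmin0 : ∀ c', 0 < c' → c' < h → τ^[c'] j₀ ≠ j₀ := by
    intro c' hc'0 hc'h hcontra
    have := tdm_period n m h hcop hh hh1 S τ hτS hτstep horb j₀ hj₀ c' hc'0 hcontra
    omega
  have hdist0 := tdm_distinct τ j₀ h hcyc0 hmin0
  have himcard0 : ((Finset.range h).image (fun i => τ^[i] j₀)).card = h := by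
    rw [Finset.card_image_of_injOn, Finset.card_range]
    intro a ha b hb hab
    exact hdist0 a b (Finset.mem_range.mp ha) (Finset.mem_range.mp hb) hab
  have himsub0 : (Finset.range h).image (fun i => τ^[i] j₀) ⊆ S := by
    intro s hs
    obtain ⟨i, -, rfl⟩ := Finset.mem_image.mp hs
    exact horb j₀ hj₀ i
  have himeq0 : (Finset.range h).image (fun i => τ^[i] j₀) = S :=
    Finset.eq_of_subset_of_card_le himsub0 (by rw [himcard0, hScard])
  have hsurj : ∀ s ∈ S, ∃ i, i < h ∧ τ^[i] j₀ = s := by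
    intro s hs
    have := himeq0 ▸ hs
    obtain ⟨i, hi, hieq⟩ := Finset.mem_image.mp this
    exact ⟨i, Finset.mem_range.mp hi, hieq⟩
  -- residues
  have hres : ∀ j ∈ S, ∀ i : ℕ, (h:ℤ) ∣ (τ^[i] j - (j + i * n)) := by
    intro j hj i
    induction i with
    | zero => simp
    | succ i ih =>
      rw [Function.iterate_succ_apply']
      rcases hτstep (τ^[i] j) (horb j hj i) with hst | hst
      · rw [hst]
        have : τ^[i] j + (n:ℤ) - (j + (i+1 : ℕ) * n) = τ^[i] j - (j + i * n) := by
          push_cast; ring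
        rw [this]; exact ih
      · rw [hst]
        have : τ^[i] j - (m:ℤ) - (j + (i+1 : ℕ) * n) = (τ^[i] j - (j + i * n)) - h := by
          push_cast [hh]; ring
        rw [this]
        exact dvd_sub ih dvd_rfl
  have hincong : ∀ s ∈ S, ∀ s' ∈ S, (h:ℤ) ∣ s - s' → s = s' := by
    intro s hs s' hs' hdvd
    obtain ⟨a, ha, rfl⟩ := hsurj s hs
    obtain ⟨b, hb, rfl⟩ := hsurj s' hs'
    have h1 := hres j₀ hj₀ a
    have h2 := hres j₀ hj₀ b
    have hd : (h:ℤ) ∣ ((a:ℤ) - b) * n := by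
      have : ((a:ℤ) - b) * n = (τ^[a] j₀ - τ^[b] j₀)
          - (τ^[a] j₀ - (j₀ + a * n)) + (τ^[b] j₀ - (j₀ + b * n)) := by ring
      rw [this]
      exact dvd_add (dvd_sub hdvd h1) h2
    have hcophn : IsCoprime (h:ℤ) (n:ℤ) := by
      rw [Nat.isCoprime_iff_coprime]
      have : Nat.Coprime (n + m) n := by
        rw [Nat.add_comm]
        exact (Nat.coprime_add_self_left).mpr (Nat.coprime_comm.mp hcop)
      rw [hh]
      exact this
    have hdvd2 : (h:ℤ) ∣ ((a:ℤ) - b) := hcophn.dvd_of_dvd_mul_right hd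
    have : ((a:ℤ) - b) = 0 := by
      apply Int.eq_zero_of_abs_lt_dvd hdvd2
      rw [abs_sub_lt_iff]
      constructor <;> [skip; skip] <;> push_cast <;> omega
    have : a = b := by omega
    rw [this]
  exact ⟨hScard, hcyc0, hdist0, hsurj, hincong⟩

end Comb

section NF

theorem tdm_nf (k : Type) [Field k] (p : ℕ) [Fact p.Prime] [ExpChar k p] [PerfectRing k p]
    (n m : ℕ) (hcop : Nat.Coprime n m) (h : ℕ) (hh : h = n + m) (hh1 : 1 ≤ h)
    (Z : GradedTDM k p n m) (hdim : Module.finrank k Z.Vsp = h)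
    (S : Finset ℤ) (hS : ∀ j : ℤ, j ∈ S ↔ Z.grading j ≠ ⊥) (hne : S.Nonempty) :
    S.card = h ∧
    ((tdmStep S n m)^[h] (S.min' hne) = S.min' hne) ∧
    (∀ i1 i2, i1 < h → i2 < h →
      (tdmStep S n m)^[i1] (S.min' hne) = (tdmStep S n m)^[i2] (S.min' hne) → i1 = i2) ∧
    (∀ s ∈ S, ∃ i, i < h ∧ (tdmStep S n m)^[i] (S.min' hne) = s) ∧
    ∃ e : ℕ → Z.Vsp, ∃ lam : k, lam ≠ 0 ∧
      (∀ i, e i ∈ Z.grading ((tdmStep S n m)^[i] (S.min' hne))) ∧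
      (∀ i, e i ≠ 0) ∧
      (∀ i, Z.grading ((tdmStep S n m)^[i] (S.min' hne)) = Submodule.span k {e i}) ∧
      e h = lam • e 0 ∧
      (∀ i, Z.F (e i) =
        if (tdmStep S n m)^[i] (S.min' hne) + (n : ℤ) ∈ S then e (i + 1) else 0) ∧
      (∀ i, Z.Vo (e (i + 1)) =
        if (tdmStep S n m)^[i] (S.min' hne) + (n : ℤ) ∈ S then 0 else e i) := by
  classical
  have hp2 : 2 ≤ p := (Fact.out : p.Prime).two_le
  set c : ℕ → ℤ := fun i => (tdmStep S n m)^[i] (S.min' hne) with hc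
  -- basic facts about F and Vo
  have hF0 : Z.F 0 = 0 := by
    have := Z.F_add 0 0
    simpa using this.symm
  have hV0 : Z.Vo 0 = 0 := by
    have := Z.Vo_add 0 0
    simpa using this.symm
  -- the coeLinearMap equivalence
  set eqv := LinearEquiv.ofBijective (DirectSum.coeLinearMap Z.grading) Z.internal with heqv
  -- projections
  set π : ℤ → Z.Vsp → Z.Vsp := fun j x => ((eqv.symm x) j : Z.Vsp) with hπ
  have hπ_mem : ∀ (j : ℤ) (x : Z.Vsp), x ∈ Z.grading j → π j x = x := by
    intro j x hx
    rw [hπ]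
    simp only []
    rw [Z.internal.ofBijective_coeLinearMap_of_mem hx]
  have hπ_ne : ∀ (i j : ℤ) (x : Z.Vsp), x ∈ Z.grading i → i ≠ j → π j x = 0 := by
    intro i j x hx hij
    rw [hπ]
    simp only []
    rw [Z.internal.ofBijective_coeLinearMap_of_mem_ne hij hx]
    rfl
  have hπ_add : ∀ (j : ℤ) (x y : Z.Vsp), π j (x + y) = π j x + π j y := by
    intro j x y
    rw [hπ]
    simp only [map_add]
    rfl
  have hπ_sum : ∀ (j : ℤ) (t : Finset ℤ) (f : ℤ → Z.Vsp),
      π j (∑ i ∈ t, f i) = ∑ i ∈ t, π j (f i) := by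
    intro j t f
    induction t using Finset.induction_on with
    | empty => simp [hπ]
    | insert _ _ hx ih =>
      rw [Finset.sum_insert hx, Finset.sum_insert hx, hπ_add, ih]
  -- decomposition into homogeneous parts
  have hdecomp : ∀ y : Z.Vsp, ∃ t : Finset ℤ, ∃ f : ℤ → Z.Vsp,
      (∀ i, f i ∈ Z.grading i) ∧ y = ∑ i ∈ t, f i := by
    intro y
    refine ⟨(eqv.symm y).support, fun i => ((eqv.symm y) i : Z.Vsp),
      fun i => ((eqv.symm y) i).2, ?_⟩
    conv_lhs => rw [← eqv.apply_symm_apply y]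
    rw [heqv]
    change DirectSum.coeLinearMap Z.grading _ = _
    rw [DirectSum.coeLinearMap_eq_dfinsuppSum]
    rfl
  -- extraction of the homogeneous preimage under Vo
  have hLext : ∀ (j : ℤ) (x : Z.Vsp), x ∈ Z.grading j → x ≠ 0 → (∃ y, Z.Vo y = x) →
      ∃ y, y ∈ Z.grading (j - (m : ℤ)) ∧ Z.Vo y = x := by
    intro j x hxG hxne hex
    obtain ⟨y, hy⟩ := hex
    obtain ⟨t, f, hf, hyd⟩ := hdecomp y
    have hVsum : x = ∑ i ∈ t, Z.Vo (f i) := by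
      rw [← hy, hyd]
      clear hy hyd
      induction t using Finset.induction_on with
      | empty => simpa using hV0
      | insert _ _ hx ih => rw [Finset.sum_insert hx, Finset.sum_insert hx, Z.Vo_add, ih]
    have hterm : ∀ i ∈ t, i ≠ j - (m : ℤ) → π j (Z.Vo (f i)) = 0 := by
      intro i _ hine
      refine hπ_ne (i + m) j (Z.Vo (f i)) (Z.Vo_deg i (f i) (hf i)) ?_
      omega
    have hx1 : x = π j x := (hπ_mem j x hxG).symm
    by_cases hmem : j - (m : ℤ) ∈ t
    · refine ⟨f (j - (m : ℤ)), hf _, ?_⟩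
      have hVmem : Z.Vo (f (j - (m : ℤ))) ∈ Z.grading j := by
        have := Z.Vo_deg (j - (m : ℤ)) (f _) (hf _)
        rwa [show j - (m : ℤ) + m = j by ring] at this
      have := Finset.sum_eq_single_of_mem (j - (m : ℤ)) hmem
        (fun i hi hine => hterm i hi hine)
      rw [hx1, hVsum, hπ_sum, this, hπ_mem j _ hVmem]
    · exfalso
      apply hxne
      rw [hx1, hVsum, hπ_sum]
      apply Finset.sum_eq_zero
      intro i hi
      exact hterm i hi (fun hcon => hmem (hcon ▸ hi))
  -- if F vanishes on a nonzero graded piece, we can step back by m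
  have hVside : ∀ j, j ∈ S → (∀ x ∈ Z.grading j, Z.F x = 0) → j - (m : ℤ) ∈ S := by
    intro j hj hFzero
    obtain ⟨x, hxG, hxne⟩ := Submodule.exists_mem_ne_zero_of_ne_bot ((hS j).mp hj)
    have hxr : ∃ y, Z.Vo y = x := by
      have hx : x ∈ Set.range Z.Vo := by rw [Z.range_Vo]; exact hFzero x hxG
      exact hx
    obtain ⟨y, hyG, hyVo⟩ := hLext j x hxG hxne hxr
    have hyne : y ≠ 0 := fun h0 => hxne (by rw [← hyVo, h0, hV0])
    refine (hS _).mpr (fun hb => hyne ?_)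
    rw [hb] at hyG
    simpa using hyG
  -- nonvanishing of F forces the step forward
  have hFside : ∀ j, (∃ x ∈ Z.grading j, Z.F x ≠ 0) → j + (n : ℤ) ∈ S := by
    rintro j ⟨x, hx, hFx⟩
    refine (hS _).mpr (fun hb => hFx ?_)
    have := Z.F_deg j x hx
    rw [hb] at this
    simpa using this
  -- the step map preserves S
  have hτS : ∀ j ∈ S, tdmStep S n m j ∈ S := by
    intro j hj
    unfold tdmStep
    by_cases hjn : j + (n : ℤ) ∈ S
    · simpa [hjn]
    · rw [if_neg hjn]
      refine hVside j hj ?_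
      intro x hx
      by_contra hFx
      exact hjn (hFside j ⟨x, hx, hFx⟩)
  have hτstep : ∀ j ∈ S, tdmStep S n m j = j + (n : ℤ) ∨ tdmStep S n m j = j - (m : ℤ) := by
    intro j _
    unfold tdmStep
    split
    · exact Or.inl rfl
    · exact Or.inr rfl
  -- counting: the support has at most h elements, with dimensions summing to h
  letI hfint : Fintype {j : ℤ // Z.grading j ≠ ⊥} :=
    Fintype.subtype S (fun j => hS j)
  have hcardsub : Fintype.card {j : ℤ // Z.grading j ≠ ⊥} = S.card :=
    Fintype.subtype_card S (fun j => hS j)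
  have hinternal' : DirectSum.IsInternal (fun i : {j : ℤ // Z.grading j ≠ ⊥} => Z.grading i) :=
    DirectSum.isInternal_ne_bot_iff.mpr Z.internal
  have hsum : ∑ i : {j : ℤ // Z.grading j ≠ ⊥}, finrank k (Z.grading i) = h := by
    have e1 := (LinearEquiv.ofBijective
      (DirectSum.coeLinearMap (fun i : {j : ℤ // Z.grading j ≠ ⊥} => Z.grading i))
      hinternal').symm.finrank_eq
    rw [Module.finrank_directSum] at e1
    rw [← e1, hdim]
  have hpos : ∀ i : {j : ℤ // Z.grading j ≠ ⊥}, 1 ≤ finrank k (Z.grading i) := by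
    intro i
    have : Nontrivial (Z.grading i) := Submodule.nontrivial_iff_ne_bot.mpr i.2
    exact Module.finrank_pos
  have hcard_le : S.card ≤ h := by
    rw [← hcardsub, ← hsum]
    have : Fintype.card {j : ℤ // Z.grading j ≠ ⊥}
        = ∑ _i : {j : ℤ // Z.grading j ≠ ⊥}, (1 : ℕ) := by simp
    rw [this]
    exact Finset.sum_le_sum (fun i _ => hpos i)
  -- the orbit lemma
  obtain ⟨hScard, hcyc, hinj, hsurj, hincong⟩ := tdm_orbit n m h hcop hh hh1 S
    (tdmStep S n m) hτS hτstep hcard_le (S.min' hne) (S.min'_mem hne)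
  -- every nonzero graded piece is one-dimensional
  have hone : ∀ j ∈ S, finrank k (Z.grading j) = 1 := by
    intro j hj
    by_contra hne1
    have h2le : 2 ≤ finrank k (Z.grading j) := by
      have h1le : 1 ≤ finrank k (Z.grading j) := hpos ⟨j, (hS j).mp hj⟩
      omega
    have : (h : ℕ) < ∑ i : {j : ℤ // Z.grading j ≠ ⊥}, finrank k (Z.grading i) := by
      have hlt : ∑ _i : {j : ℤ // Z.grading j ≠ ⊥}, (1 : ℕ)
          < ∑ i : {j : ℤ // Z.grading j ≠ ⊥}, finrank k (Z.grading i) := by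
        apply Finset.sum_lt_sum (fun i _ => hpos i)
        exact ⟨⟨j, (hS j).mp hj⟩, Finset.mem_univ _, by exact h2le⟩
      calc (h : ℕ) = S.card := hScard.symm
        _ = Fintype.card {j : ℤ // Z.grading j ≠ ⊥} := hcardsub.symm
        _ = ∑ _i : {j : ℤ // Z.grading j ≠ ⊥}, (1 : ℕ) := by simp
        _ < _ := hlt
    omega
  -- spanning by a nonzero vector
  have hspan : ∀ j ∈ S, ∀ x ∈ Z.grading j, x ≠ 0 → Z.grading j = Submodule.span k {x} := by
    intro j hj x hx hxne
    have hle : Submodule.span k {x} ≤ Z.grading j := by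
      rw [Submodule.span_le]
      simpa using hx
    refine (Submodule.eq_of_le_of_finrank_le hle ?_).symm
    rw [finrank_span_singleton hxne, hone j hj]
  have hprop : ∀ j ∈ S, ∀ x ∈ Z.grading j, x ≠ 0 → ∀ y ∈ Z.grading j, ∃ a : k, y = a • x := by
    intro j hj x hx hxne y hy
    rw [hspan j hj x hx hxne, Submodule.mem_span_singleton] at hy
    obtain ⟨a, ha⟩ := hy
    exact ⟨a, ha.symm⟩
  -- type determination: F acts nontrivially on the piece at j iff j + n ∈ S
  have hFt : ∀ j ∈ S, ((j + (n : ℤ) ∈ S) ↔ ∃ x ∈ Z.grading j, Z.F x ≠ 0) := by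
    intro j hj
    constructor
    · intro hjn
      by_contra hno
      push_neg at hno
      have hjm : j - (m : ℤ) ∈ S := hVside j hj hno
      have hjeq : j + (n : ℤ) = j - (m : ℤ) := by
        refine hincong _ hjn _ hjm ⟨1, ?_⟩
        push_cast [hh]
        ring
      omega
    · intro ⟨x, hx, hFx⟩
      exact hFside j ⟨x, hx, hFx⟩
  -- F is injective on one-dimensional pieces of F-type
  have hFinj : ∀ j ∈ S, (j + (n : ℤ) ∈ S) → ∀ x ∈ Z.grading j, x ≠ 0 → Z.F x ≠ 0 := by
    intro j hj hjn x hx hxne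
    obtain ⟨g, hgG, hgF⟩ := (hFt j hj).mp hjn
    have hgne : g ≠ 0 := fun h0 => hgF (by rw [h0, hF0])
    obtain ⟨a, hax⟩ := hprop j hj g hgG hgne x hx
    have hane : a ≠ 0 := fun h0 => hxne (by rw [hax, h0, zero_smul])
    rw [hax, Z.F_smul]
    intro hcontra
    rcases smul_eq_zero.mp hcontra with h' | h'
    · exact hane (pow_eq_zero_iff (by omega)|>.mp h')
    · exact hgF h'
  -- the step function on vectors
  have hstepfun : ∀ (j : ℤ) (v : Z.Vsp), ∃ w : Z.Vsp,
      j ∈ S → v ∈ Z.grading j → v ≠ 0 →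
      (w ∈ Z.grading (tdmStep S n m j) ∧ w ≠ 0 ∧
        (if j + (n : ℤ) ∈ S then (Z.F v = w ∧ Z.Vo w = 0)
         else (Z.Vo w = v ∧ Z.F v = 0))) := by
    intro j v
    by_cases hj : j ∈ S
    · by_cases hv : v ∈ Z.grading j ∧ v ≠ 0
      · obtain ⟨hvG, hvne⟩ := hv
        by_cases hjn : j + (n : ℤ) ∈ S
        · refine ⟨Z.F v, fun _ _ _ => ⟨?_, ?_, ?_⟩⟩
          · unfold tdmStep
            rw [if_pos hjn]
            exact Z.F_deg j v hvG
          · exact hFinj j hj hjn v hvG hvne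
          · rw [if_pos hjn]
            refine ⟨rfl, ?_⟩
            have hr : Z.F v ∈ Set.range Z.F := ⟨v, rfl⟩
            rw [Z.range_F] at hr
            exact hr
        · have hFzero : ∀ x ∈ Z.grading j, Z.F x = 0 := by
            intro x hx
            by_contra hFx
            exact hjn (hFside j ⟨x, hx, hFx⟩)
          have hvr : ∃ y, Z.Vo y = v := by
            have hx : v ∈ Set.range Z.Vo := by rw [Z.range_Vo]; exact hFzero v hvG
            exact hx
          obtain ⟨y, hyG, hyVo⟩ := hLext j v hvG hvne hvr
          refine ⟨y, fun _ _ _ => ⟨?_, ?_, ?_⟩⟩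
          · unfold tdmStep
            rw [if_neg hjn]
            exact hyG
          · exact fun h0 => hvne (by rw [← hyVo, h0, hV0])
          · rw [if_neg hjn]
            exact ⟨hyVo, hFzero v hvG⟩
      · exact ⟨0, fun _ h1 h2 => absurd ⟨h1, h2⟩ hv⟩
    · exact ⟨0, fun h1 _ _ => absurd h1 hj⟩
  choose stf hstf using hstepfun
  -- the cycle stays in S
  have hc0 : c 0 = S.min' hne := rfl
  have hcsucc : ∀ i, c (i + 1) = tdmStep S n m (c i) := by
    intro i
    rw [hc]
    exact Function.iterate_succ_apply' (tdmStep S n m) i (S.min' hne)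
  have hcS : ∀ i, c i ∈ S := by
    intro i
    induction i with
    | zero => rw [hc0]; exact S.min'_mem hne
    | succ i ih => rw [hcsucc]; exact hτS _ ih
  -- the basis vectors
  obtain ⟨x₀, hx₀G, hx₀ne⟩ :=
    Submodule.exists_mem_ne_zero_of_ne_bot ((hS _).mp (S.min'_mem hne))
  set e : ℕ → Z.Vsp := fun i => Nat.rec x₀ (fun i v => stf (c i) v) i with he
  have he0 : e 0 = x₀ := rfl
  have hesucc : ∀ i, e (i + 1) = stf (c i) (e i) := fun i => rfl
  have heinv : ∀ i, e i ∈ Z.grading (c i) ∧ e i ≠ 0 := by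
    intro i
    induction i with
    | zero => rw [he0, hc0]; exact ⟨hx₀G, hx₀ne⟩
    | succ i ih =>
      have hst := hstf (c i) (e i) (hcS i) ih.1 ih.2
      rw [hesucc, hcsucc]
      exact ⟨hst.1, hst.2.1⟩
  have hFe : ∀ i, Z.F (e i) = if c i + (n : ℤ) ∈ S then e (i + 1) else 0 := by
    intro i
    have hst := (hstf (c i) (e i) (hcS i) (heinv i).1 (heinv i).2).2.2
    by_cases hc' : c i + (n : ℤ) ∈ S
    · rw [if_pos hc'] at hst ⊢
      rw [hesucc]
      exact hst.1
    · rw [if_neg hc'] at hst ⊢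
      exact hst.2
  have hVe : ∀ i, Z.Vo (e (i + 1)) = if c i + (n : ℤ) ∈ S then 0 else e i := by
    intro i
    have hst := (hstf (c i) (e i) (hcS i) (heinv i).1 (heinv i).2).2.2
    by_cases hc' : c i + (n : ℤ) ∈ S
    · rw [if_pos hc'] at hst ⊢
      rw [hesucc]
      exact hst.2
    · rw [if_neg hc'] at hst ⊢
      rw [hesucc]
      exact hst.1
  -- the closing scalar
  have hch : c h = c 0 := by
    rw [hc0, hc]
    exact hcyc
  have hehG : e h ∈ Z.grading (c 0) := hch ▸ (heinv h).1
  obtain ⟨lam, hlam⟩ := hprop (c 0) (hcS 0) (e 0) (heinv 0).1 (heinv 0).2 (e h) hehG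
  have hlamne : lam ≠ 0 := by
    intro h0
    apply (heinv h).2
    rw [hlam, h0, zero_smul]
  refine ⟨hScard, hcyc, hinj, hsurj, e, lam, hlamne, fun i => (heinv i).1, fun i => (heinv i).2,
    ?_, hlam, hFe, hVe⟩
  intro i
  exact hspan (c i) (hcS i) (e i) (heinv i).1 (heinv i).2

end NF

theorem stmt17 (k : Type) [Field k] [IsAlgClosed k] (p : ℕ) [Fact p.Prime] [CharP k p]
    [ExpChar k p] [PerfectRing k p] (n m : ℕ) (hcop : Nat.Coprime n m)
    (hnm : n ≠ m) (h : ℕ) (hh : h = n + m) (hh1 : 1 ≤ h)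
    (Z₁ Z₂ : GradedTDM k p n m)
    (hdim₁ : Module.finrank k Z₁.Vsp = h) (hdim₂ : Module.finrank k Z₂.Vsp = h)
    (hsupp : {j : ℤ | Z₁.grading j ≠ ⊥} = {j : ℤ | Z₂.grading j ≠ ⊥}) :
    ∃ φ : Z₁.Vsp ≃ₗ[k] Z₂.Vsp,
      (∀ j : ℤ, (Z₁.grading j).map (φ : Z₁.Vsp →ₗ[k] Z₂.Vsp) = Z₂.grading j) ∧
      (∀ x, φ (Z₁.F x) = Z₂.F (φ x)) ∧
      (∀ x, φ (Z₁.Vo x) = Z₂.Vo (φ x)) := by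
  classical
  have hp2 : 2 ≤ p := (Fact.out : p.Prime).two_le
  -- the common support
  have hfin1 : {j : ℤ | Z₁.grading j ≠ ⊥}.Finite :=
    Submodule.finite_ne_bot_of_iSupIndep Z₁.internal.submodule_iSupIndep
  set S : Finset ℤ := hfin1.toFinset with hSdef
  have hS1 : ∀ j : ℤ, j ∈ S ↔ Z₁.grading j ≠ ⊥ := by
    intro j
    rw [hSdef, Set.Finite.mem_toFinset]
    rfl
  have hS2 : ∀ j : ℤ, j ∈ S ↔ Z₂.grading j ≠ ⊥ := by
    intro j
    rw [hS1 j]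
    exact Iff.of_eq (congrArg (j ∈ ·) hsupp)
  have hne : S.Nonempty := by
    by_contra hcon
    rw [Finset.not_nonempty_iff_eq_empty] at hcon
    have hall : ∀ j : ℤ, Z₁.grading j = ⊥ := by
      intro j
      by_contra hb
      have := (hS1 j).mpr hb
      rw [hcon] at this
      simp at this
    have htop : (⊤ : Submodule k Z₁.Vsp) = ⊥ := by
      rw [← Z₁.internal.submodule_iSup_eq_top]
      simp [hall]
    have : finrank k Z₁.Vsp = 0 := by
      rw [← finrank_top k Z₁.Vsp, htop, finrank_bot]
    omega
  -- normal forms of both modules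
  obtain ⟨hScard, hcyc, hinj, hsurj, e₁, lam₁, hlam₁, hmem₁, hne₁, hspan₁, heh₁, hFe₁, hVe₁⟩ :=
    tdm_nf k p n m hcop h hh hh1 Z₁ hdim₁ S hS1 hne
  obtain ⟨-, -, -, -, e₂, lam₂, hlam₂, hmem₂, hne₂, hspan₂, heh₂, hFe₂, hVe₂⟩ :=
    tdm_nf k p n m hcop h hh hh1 Z₂ hdim₂ S hS2 hne
  set c : ℕ → ℤ := fun i => (tdmStep S n m)^[i] (S.min' hne) with hc
  -- bases
  haveI : Nonempty (Fin h) := ⟨⟨0, by omega⟩⟩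
  have hcinj : Function.Injective (fun i : Fin h => c i) := by
    intro i1 i2 h12
    exact Fin.ext (hinj i1 i2 i1.isLt i2.isLt h12)
  have hli₁ : LinearIndependent k (fun i : Fin h => e₁ i) := by
    refine iSupIndep.linearIndependent (fun i : Fin h => Z₁.grading (c i)) ?_ ?_ ?_
    · exact Z₁.internal.submodule_iSupIndep.comp hcinj
    · exact fun i => hmem₁ i
    · exact fun i => hne₁ i
  have hli₂ : LinearIndependent k (fun i : Fin h => e₂ i) := by
    refine iSupIndep.linearIndependent (fun i : Fin h => Z₂.grading (c i)) ?_ ?_ ?_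
    · exact Z₂.internal.submodule_iSupIndep.comp hcinj
    · exact fun i => hmem₂ i
    · exact fun i => hne₂ i
  set b₁ : Basis (Fin h) k Z₁.Vsp :=
    basisOfLinearIndependentOfCardEqFinrank hli₁ (by simp [hdim₁]) with hb₁
  set b₂ : Basis (Fin h) k Z₂.Vsp :=
    basisOfLinearIndependentOfCardEqFinrank hli₂ (by simp [hdim₂]) with hb₂
  have hb₁app : ∀ i : Fin h, b₁ i = e₁ i := by
    intro i
    rw [hb₁, coe_basisOfLinearIndependentOfCardEqFinrank]
  have hb₂app : ∀ i : Fin h, b₂ i = e₂ i := by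
    intro i
    rw [hb₂, coe_basisOfLinearIndependentOfCardEqFinrank]
  -- the scaling constant
  have hphpos : 0 < p ^ h - 1 := by
    have h1 : 2 ^ 1 ≤ 2 ^ h := Nat.pow_le_pow_right (by omega) hh1
    have h2 : 2 ^ h ≤ p ^ h := Nat.pow_le_pow_left hp2 h
    omega
  obtain ⟨μ, hμ⟩ := IsAlgClosed.exists_pow_nat_eq (lam₁ * lam₂⁻¹) hphpos
  have hμne : μ ≠ 0 := by
    intro h0
    rw [h0, zero_pow (by omega)] at hμ
    have hl2 : lam₂ ≠ 0 := hlam₂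
    field_simp at hμ
    exact hlam₁ (by simpa using hμ.symm)
  have hkey : lam₁ * μ = μ ^ (p ^ h) * lam₂ := by
    have hph : p ^ h = (p ^ h - 1) + 1 := by omega
    rw [hph, pow_succ, hμ]
    field_simp
  -- the scaled basis and the isomorphism
  have hwunit : ∀ i : Fin h, IsUnit (μ ^ (p ^ (i : ℕ))) :=
    fun i => (pow_ne_zero _ hμne).isUnit
  set b₂' : Basis (Fin h) k Z₂.Vsp := b₂.isUnitSMul hwunit with hb₂'
  set φ : Z₁.Vsp ≃ₗ[k] Z₂.Vsp := b₁.equiv b₂' (Equiv.refl _) with hφdef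
  have hφb : ∀ i : Fin h, φ (e₁ i) = μ ^ (p ^ (i : ℕ)) • e₂ i := by
    intro i
    rw [← hb₁app i, hφdef, Basis.equiv_apply, Equiv.refl_apply, hb₂',
      Basis.isUnitSMul_apply, hb₂app]
  have hφn : ∀ i : ℕ, i < h → φ (e₁ i) = μ ^ (p ^ i) • e₂ i := fun i hi => hφb ⟨i, hi⟩
  have hφh : φ (e₁ h) = μ ^ (p ^ h) • e₂ h := by
    rw [heh₁, map_smul, hφn 0 (by omega), heh₂, smul_smul, smul_smul]
    congr 1
    simpa using hkey
  have hφle : ∀ i : ℕ, i ≤ h → φ (e₁ i) = μ ^ (p ^ i) • e₂ i := by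
    intro i hi
    rcases Nat.lt_or_ge i h with hlt | hge
    · exact hφn i hlt
    · have hieq : i = h := by omega
      subst hieq
      exact hφh
  -- F-commutation on the basis
  have hFb : ∀ i : ℕ, i < h → φ (Z₁.F (e₁ i)) = Z₂.F (φ (e₁ i)) := by
    intro i hi
    rw [hFe₁ i, hφn i hi]
    by_cases hc' : c i + (n : ℤ) ∈ S
    · rw [if_pos hc', hφle (i + 1) (by omega), Z₂.F_smul, hFe₂ i, if_pos hc']
      congr 1
      rw [← pow_mul, pow_succ]
    · rw [if_neg hc', map_zero, Z₂.F_smul, hFe₂ i, if_neg hc', smul_zero]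
  -- V-commutation on the basis
  have hVh₁ : Z₁.Vo (e₁ h) = if c (h - 1) + (n : ℤ) ∈ S then 0 else e₁ (h - 1) := by
    have := hVe₁ (h - 1)
    rwa [show h - 1 + 1 = h by omega] at this
  have hVh₂ : Z₂.Vo (e₂ h) = if c (h - 1) + (n : ℤ) ∈ S then 0 else e₂ (h - 1) := by
    have := hVe₂ (h - 1)
    rwa [show h - 1 + 1 = h by omega] at this
  have hV0₁ : Z₁.Vo (e₁ 0) = (frobeniusEquiv k p).symm lam₁⁻¹ • Z₁.Vo (e₁ h) := by
    conv_rhs => rw [heh₁, Z₁.Vo_smul, smul_smul, ← map_mul,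
      inv_mul_cancel₀ hlam₁, map_one, one_smul]
  have hV0₂ : Z₂.Vo (e₂ 0) = (frobeniusEquiv k p).symm lam₂⁻¹ • Z₂.Vo (e₂ h) := by
    conv_rhs => rw [heh₂, Z₂.Vo_smul, smul_smul, ← map_mul,
      inv_mul_cancel₀ hlam₂, map_one, one_smul]
  have hφ0 : φ (e₁ 0) = μ • e₂ 0 := by
    have := hφn 0 (by omega)
    simpa using this
  have hVb0 : φ (Z₁.Vo (e₁ 0)) = Z₂.Vo (φ (e₁ 0)) := by
    by_cases hc' : c (h - 1) + (n : ℤ) ∈ S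
    · rw [hV0₁, hVh₁, if_pos hc', smul_zero, map_zero, hφ0, Z₂.Vo_smul, hV0₂, hVh₂,
        if_pos hc', smul_zero, smul_zero]
    · rw [hV0₁, hVh₁, if_neg hc', map_smul, hφn (h - 1) (by omega), hφ0, Z₂.Vo_smul,
        hV0₂, hVh₂, if_neg hc', smul_smul, smul_smul]
      congr 1
      apply injective_pow_p k p
      rw [mul_pow, mul_pow, frobeniusEquiv_symm_pow_p, frobeniusEquiv_symm_pow_p, ← pow_mul]
      have hexp : p ^ (h - 1) * p = p ^ h := by
        rw [← pow_succ]
        congr 1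
        omega
      rw [hexp]
      rw [frobeniusEquiv_symm_pow_p]
      field_simp
      linear_combination -hkey
  have hVb : ∀ i : ℕ, i < h → φ (Z₁.Vo (e₁ i)) = Z₂.Vo (φ (e₁ i)) := by
    intro i hi
    match i with
    | 0 => exact hVb0
    | (j + 1) =>
      rw [hVe₁ j, hφn (j + 1) hi, Z₂.Vo_smul, hVe₂ j]
      by_cases hc' : c j + (n : ℤ) ∈ S
      · rw [if_pos hc', if_pos hc', map_zero, smul_zero]
      · rw [if_neg hc', if_neg hc', hφn j (by omega)]
        congr 1
        apply injective_pow_p k p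
        rw [frobeniusEquiv_symm_pow_p, ← pow_mul, ← pow_succ]
  -- global commutation
  have hFcomm : ∀ x, φ (Z₁.F x) = Z₂.F (φ x) := by
    refine tdm_ext b₁ (φ : Z₁.Vsp →ₗ[k] Z₂.Vsp) Z₁.F Z₂.F (fun a => a ^ p)
      Z₁.F_add Z₂.F_add Z₁.F_smul Z₂.F_smul ?_
    intro i
    rw [hb₁app]
    exact hFb i i.isLt
  have hVcomm : ∀ x, φ (Z₁.Vo x) = Z₂.Vo (φ x) := by
    refine tdm_ext b₁ (φ : Z₁.Vsp →ₗ[k] Z₂.Vsp) Z₁.Vo Z₂.Vo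
      (fun a => (frobeniusEquiv k p).symm a)
      Z₁.Vo_add Z₂.Vo_add Z₁.Vo_smul Z₂.Vo_smul ?_
    intro i
    rw [hb₁app]
    exact hVb i i.isLt
  refine ⟨φ, ?_, hFcomm, hVcomm⟩
  intro j
  by_cases hj : j ∈ S
  · obtain ⟨i, hih, hieq⟩ := hsurj j hj
    rw [← hieq, hspan₁ i, Submodule.map_span, Set.image_singleton]
    have hφe : (φ : Z₁.Vsp →ₗ[k] Z₂.Vsp) (e₁ i) = μ ^ (p ^ i) • e₂ i := hφn i hih
    rw [hφe, Submodule.span_singleton_smul_eq ((pow_ne_zero _ hμne).isUnit) _]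
    exact (hspan₂ i).symm
  · have h1 : Z₁.grading j = ⊥ := by
      by_contra hb
      exact hj ((hS1 j).mpr hb)
    have h2 : Z₂.grading j = ⊥ := by
      by_contra hb
      exact hj ((hS2 j).mpr hb)
    rw [h1, h2, Submodule.map_bot]
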